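/- In U_1, the element Sc := σ_1 σ_2 − σ_2 σ_1 − 1/2 satisfies σ_1 Sc + Sc σ_1 = 0 and σ_2 Sc + Sc σ_2 = 0. (The Scasimir of U(osp(1|2)).) -/

import Mathlib

open scoped BigOperators TensorProduct
open Nat

noncomputable section

/-- The symplectic metric `g` of `osp(1|2n)` (0-indexed). -/
def gmat (n : ℕ) (a b : Fin (2*n)) : ℚ :=
  if (a:ℕ) < n ∧ (b:ℕ) = (a:ℕ) + n then -1
  else if (b:ℕ) < n ∧ (a:ℕ) = (b:ℕ) + n then 1
  else 0

/-- The defining relations of `U(osp(1|2n))`: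
`(σₐσ_b + σ_bσₐ)σ_c - σ_c(σₐσ_b + σ_bσₐ) = -g_{ac} σ_b - g_{bc} σₐ`. -/
inductive OspRel (n : ℕ) : FreeAlgebra ℚ (Fin (2*n)) → FreeAlgebra ℚ (Fin (2*n)) → Prop
  | rel (a b c : Fin (2*n)) : OspRel n
      ((FreeAlgebra.ι ℚ a * FreeAlgebra.ι ℚ b + FreeAlgebra.ι ℚ b * FreeAlgebra.ι ℚ a)
          * FreeAlgebra.ι ℚ c)
      (FreeAlgebra.ι ℚ c *
          (FreeAlgebra.ι ℚ a * FreeAlgebra.ι ℚ b + FreeAlgebra.ι ℚ b * FreeAlgebra.ι ℚ a)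
        - algebraMap ℚ (FreeAlgebra ℚ (Fin (2*n))) (gmat n a c) * FreeAlgebra.ι ℚ b
        - algebraMap ℚ (FreeAlgebra ℚ (Fin (2*n))) (gmat n b c) * FreeAlgebra.ι ℚ a)

/-- The universal enveloping superalgebra `U(osp(1|2n))`. -/
abbrev U (n : ℕ) := RingQuot (OspRel n)

/-- The fermionic generators `σₐ`. -/
def σ (n : ℕ) (a : Fin (2*n)) : U n :=
  RingQuot.mkAlgHom ℚ (OspRel n) (FreeAlgebra.ι ℚ a)

/-- The bosonic generators `σ_{ab} = σₐσ_b + σ_bσₐ`. -/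
def σσ (n : ℕ) (a b : Fin (2*n)) : U n := σ n a * σ n b + σ n b * σ n a

/-- The antisymmetrized monomial `[a₁ … a_p]`. -/
def brkt (n : ℕ) (p : ℕ) (a : Fin p → Fin (2*n)) : U n :=
  ∑ s : Equiv.Perm (Fin p),
    (Equiv.Perm.sign s : ℤ) • (List.ofFn fun i => σ n (a (s i))).prod

/-- `Ω`, the span of all the antisymmetrized monomials. -/
def Omega (n : ℕ) : Submodule ℚ (U n) :=
  Submodule.span ℚ {x | ∃ p, ∃ a : Fin p → Fin (2*n), x = brkt n p a}


/-- In `U(osp(1|2))`, the Scasimir `Sc = σ₁σ₂ − σ₂σ₁ − 1/2` anticommutes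
with both fermionic generators `σ₁`, `σ₂` (0-indexed: `σ 1 0`, `σ 1 1`). -/

lemma relU (a b c : Fin (2*1)) :
    (σ 1 a * σ 1 b + σ 1 b * σ 1 a) * σ 1 c
      = σ 1 c * (σ 1 a * σ 1 b + σ 1 b * σ 1 a)
        - algebraMap ℚ (U 1) (gmat 1 a c) * σ 1 b
        - algebraMap ℚ (U 1) (gmat 1 b c) * σ 1 a := by
  have := RingQuot.mkAlgHom_rel ℚ (OspRel.rel a b c)
  simpa [σ, map_mul, map_sub, map_add] using this

lemma halfU (A B : U 1) (h : A + A = B + B) : A = B := by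
  have h2 := congrArg (fun z => ((1:ℚ)/2) • z) h
  rw [← two_smul ℚ A, ← two_smul ℚ B, smul_smul, smul_smul] at h2
  norm_num at h2
  exact h2

lemma h1U : σ 1 (⟨0, by decide⟩ : Fin (2*1)) * (σ 1 ⟨0, by decide⟩ * σ 1 ⟨1, by decide⟩)
    = σ 1 ⟨1, by decide⟩ * (σ 1 ⟨0, by decide⟩ * σ 1 ⟨0, by decide⟩) + σ 1 ⟨0, by decide⟩ := by
  apply halfU
  set X := σ 1 (⟨0, by decide⟩ : Fin (2*1))
  set Y := σ 1 (⟨1, by decide⟩ : Fin (2*1))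
  have h := relU ⟨0, by decide⟩ ⟨0, by decide⟩ ⟨1, by decide⟩
  rw [show gmat 1 (⟨0, by decide⟩ : Fin (2*1)) ⟨1, by decide⟩ = -1 by simp [gmat],
    Algebra.algebraMap_eq_smul_one, smul_mul_assoc, one_mul,
    show ((-1:ℚ)) • X = -X from by module, sub_neg_eq_add, sub_neg_eq_add] at h
  calc X * (X * Y) + X * (X * Y) = (X * X + X * X) * Y := by noncomm_ring
    _ = Y * (X * X + X * X) + X + X := h
    _ = (Y * (X * X) + X) + (Y * (X * X) + X) := by noncomm_ring

lemma h2U : σ 1 (⟨1, by decide⟩ : Fin (2*1)) * (σ 1 ⟨1, by decide⟩ * σ 1 ⟨0, by decide⟩)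
    = σ 1 ⟨0, by decide⟩ * (σ 1 ⟨1, by decide⟩ * σ 1 ⟨1, by decide⟩) - σ 1 ⟨1, by decide⟩ := by
  apply halfU
  set X := σ 1 (⟨0, by decide⟩ : Fin (2*1))
  set Y := σ 1 (⟨1, by decide⟩ : Fin (2*1))
  have h := relU ⟨1, by decide⟩ ⟨1, by decide⟩ ⟨0, by decide⟩
  rw [show gmat 1 (⟨1, by decide⟩ : Fin (2*1)) ⟨0, by decide⟩ = 1 by simp [gmat],
    Algebra.algebraMap_eq_smul_one, smul_mul_assoc, one_mul,
    show ((1:ℚ)) • Y = Y from by module] at h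
  calc Y * (Y * X) + Y * (Y * X) = (Y * Y + Y * Y) * X := by noncomm_ring
    _ = X * (Y * Y + Y * Y) - Y - Y := h
    _ = (X * (Y * Y) - Y) + (X * (Y * Y) - Y) := by noncomm_ring

lemma anticomm1 (X Y : U 1) (h1 : X * (X * Y) = Y * (X * X) + X) :
    X * (X * Y - Y * X - ((1:ℚ)/2) • 1) + (X * Y - Y * X - ((1:ℚ)/2) • 1) * X = 0 := by
  have e1 : X * (((1:ℚ)/2) • (1 : U 1)) = ((1:ℚ)/2) • X := by
    rw [mul_smul_comm]; simp
  have e2 : (((1:ℚ)/2) • (1 : U 1)) * X = ((1:ℚ)/2) • X := by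
    rw [smul_mul_assoc]; simp
  rw [mul_sub, mul_sub, sub_mul, sub_mul, e1, e2]
  simp only [← mul_assoc] at h1 ⊢
  rw [h1]
  simp only [mul_assoc]
  module

lemma anticomm2 (X Y : U 1) (h2 : Y * (Y * X) = X * (Y * Y) - Y) :
    Y * (X * Y - Y * X - ((1:ℚ)/2) • 1) + (X * Y - Y * X - ((1:ℚ)/2) • 1) * Y = 0 := by
  have e1 : Y * (((1:ℚ)/2) • (1 : U 1)) = ((1:ℚ)/2) • Y := by
    rw [mul_smul_comm]; simp
  have e2 : (((1:ℚ)/2) • (1 : U 1)) * Y = ((1:ℚ)/2) • Y := by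
    rw [smul_mul_assoc]; simp
  rw [mul_sub, mul_sub, sub_mul, sub_mul, e1, e2]
  simp only [← mul_assoc] at h2 ⊢
  rw [h2]
  simp only [mul_assoc]
  module

/-- In `U(osp(1|2))`, the Scasimir `Sc = σ₁σ₂ − σ₂σ₁ − 1/2` anticommutes
with both fermionic generators `σ₁`, `σ₂` (0-indexed: `σ 1 0`, `σ 1 1`). -/
theorem stmt6 :
    ∀ a : Fin (2*1),
      σ 1 a * (σ 1 ⟨0, by omega⟩ * σ 1 ⟨1, by omega⟩ - σ 1 ⟨1, by omega⟩ * σ 1 ⟨0, by omega⟩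
          - ((1:ℚ)/2) • 1)
        + (σ 1 ⟨0, by omega⟩ * σ 1 ⟨1, by omega⟩ - σ 1 ⟨1, by omega⟩ * σ 1 ⟨0, by omega⟩
          - ((1:ℚ)/2) • 1) * σ 1 a = 0 := by
  intro a
  fin_cases a
  · exact anticomm1 _ _ h1U
  · exact anticomm2 _ _ h2U

end
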